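/- Let G be a graph, k a positive integer, and v a vertex of G such that the sum of degrees of the neighbors of v satisfies Σ_{w∈N(v)} d(w) ≤ k. If G − v has an acyclic edge-coloring with k colors, then G has an acyclic edge-coloring with k colors. -/

import Mathlib

/-- A proper edge-coloring: edges sharing an endpoint get distinct colors. -/
def ProperEdgeColoring {V : Type*} (G : SimpleGraph V) (c : Sym2 V → ℕ) : Prop :=
  ∀ e₁ ∈ G.edgeSet, ∀ e₂ ∈ G.edgeSet, e₁ ≠ e₂ → (∃ v, v ∈ e₁ ∧ v ∈ e₂) → c e₁ ≠ c e₂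

/-- The subgraph consisting of edges colored `a` or `b`. -/
def twoColorSubgraph {V : Type*} (G : SimpleGraph V) (c : Sym2 V → ℕ) (a b : ℕ) :
    SimpleGraph V where
  Adj x y := G.Adj x y ∧ (c s(x, y) = a ∨ c s(x, y) = b)
  symm := by
    constructor
    intro x y h
    refine ⟨h.1.symm, ?_⟩
    rw [Sym2.eq_swap]
    exact h.2
  loopless := by
    constructor
    intro x h
    exact G.loopless.irrefl x h.1

/-- An acyclic edge-coloring: proper, and any two color classes induce an acyclic graph. -/
def AcyclicEdgeColoring {V : Type*} (G : SimpleGraph V) (c : Sym2 V → ℕ) : Prop :=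
  ProperEdgeColoring G c ∧ ∀ a b : ℕ, (twoColorSubgraph G c a b).IsAcyclic

/-- `G` has an acyclic edge-coloring using colors `0, …, k-1`. -/
def HasAcyclicEdgeColoring {V : Type*} (G : SimpleGraph V) (k : ℕ) : Prop :=
  ∃ c : Sym2 V → ℕ, AcyclicEdgeColoring G c ∧ ∀ e ∈ G.edgeSet, c e < k

/-- Transfer a walk avoiding the complement of `s` into the induced subgraph on `s`. -/
lemma walk_induce {W : Type*} {H : SimpleGraph W} {s : Set W} :
    ∀ {x y : W} (p : H.Walk x y) (hp : ∀ u ∈ p.support, u ∈ s),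
    ∃ q : (H.induce s).Walk ⟨x, hp x p.start_mem_support⟩ ⟨y, hp y p.end_mem_support⟩,
      q.map (SimpleGraph.Embedding.induce s).toHom = p := by
  intro x y p
  induction p with
  | nil =>
    intro hp
    exact ⟨SimpleGraph.Walk.nil, rfl⟩
  | @cons u u' y h p ih =>
    intro hp
    have hu' : ∀ z ∈ p.support, z ∈ s := fun z hz => hp z (by simp [hz])
    obtain ⟨q, hq⟩ := ih hu'
    refine ⟨SimpleGraph.Walk.cons ?_ q, ?_⟩
    · exact h
    · exact congrArg (SimpleGraph.Walk.cons h) hq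

/-- If `∑_{w ∈ N(v)} d(w) ≤ k` and `G - v` has an acyclic edge-coloring with `k`
colors, then so does `G`. -/
theorem extend_acyclic_coloring_of_small_neighbor_degree_sum {V : Type*} [Fintype V]
    [DecidableEq V] (G : SimpleGraph V) [DecidableRel G.Adj] (k : ℕ) (hk : 0 < k)
    (v : V) (hsum : ∑ w ∈ G.neighborFinset v, G.degree w ≤ k)
    (h : HasAcyclicEdgeColoring (G.induce {u : V | u ≠ v}) k) :
    HasAcyclicEdgeColoring G k := by
  classical
  set S : Set V := {u : V | u ≠ v} with hS
  obtain ⟨c, ⟨hprop, hacyc⟩, hlt⟩ := h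
  set N : Finset V := G.neighborFinset v with hN
  have hNv : ∀ w ∈ N, w ≠ v := by
    intro w hw
    exact ((G.mem_neighborFinset v w).mp hw).ne'
  -- the set of edges of `G - v` incident to a neighbor of `v`
  set E : Finset (Sym2 ↥S) :=
    N.attach.biUnion (fun w => (G.induce S).incidenceFinset ⟨w.1, hNv w.1 w.2⟩) with hE
  set F : Finset ℕ := E.image c with hF
  -- degrees in the induced graph
  have hdeg : ∀ (w : V) (hw : w ∈ N),
      (G.induce S).degree ⟨w, hNv w hw⟩ + 1 = G.degree w := by
    intro w hw
    have hadj : G.Adj v w := (G.mem_neighborFinset v w).mp hw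
    have e1 : (G.induce S).degree ⟨w, hNv w hw⟩ = ((G.neighborFinset w).erase v).card := by
      show ((G.induce S).neighborFinset _).card = _
      refine Finset.card_bij (fun u _ => (u : V)) ?_ ?_ ?_
      · intro u hu
        rw [SimpleGraph.mem_neighborFinset] at hu
        rw [Finset.mem_erase, SimpleGraph.mem_neighborFinset]
        exact ⟨u.2, hu⟩
      · intro u₁ _ u₂ _ hu
        exact Subtype.ext hu
      · intro b hb
        rw [Finset.mem_erase, SimpleGraph.mem_neighborFinset] at hb
        exact ⟨⟨b, hb.1⟩, by rw [SimpleGraph.mem_neighborFinset]; exact hb.2, rfl⟩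
    have e2 : v ∈ G.neighborFinset w := (G.mem_neighborFinset w v).mpr hadj.symm
    have e3 : G.degree w = (G.neighborFinset w).card := rfl
    have e4 : 0 < (G.neighborFinset w).card := Finset.card_pos.mpr ⟨v, e2⟩
    rw [e1, Finset.card_erase_of_mem e2]
    omega
  -- cardinality bound
  have hEF : E.card + N.card ≤ k := by
    have h2 : E.card ≤ ∑ p ∈ N.attach, (G.induce S).degree ⟨p.1, hNv p.1 p.2⟩ := by
      refine (Finset.card_biUnion_le).trans ?_
      refine Finset.sum_le_sum ?_
      intro p _
      rw [SimpleGraph.card_incidenceFinset_eq_degree]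
    have h3 : ∑ p ∈ N.attach, ((G.induce S).degree ⟨p.1, hNv p.1 p.2⟩ + 1)
        = ∑ w ∈ N, G.degree w := by
      rw [← Finset.sum_attach N (fun w => G.degree w)]
      exact Finset.sum_congr rfl (fun p _ => hdeg p.1 p.2)
    have h4 : ∑ p ∈ N.attach, ((G.induce S).degree ⟨p.1, hNv p.1 p.2⟩ + 1)
        = (∑ p ∈ N.attach, (G.induce S).degree ⟨p.1, hNv p.1 p.2⟩) + N.card := by
      rw [Finset.sum_add_distrib]
      simp
    omega
  have hFk : F ⊆ Finset.range k := by
    intro x hx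
    obtain ⟨e, he, rfl⟩ := Finset.mem_image.mp hx
    obtain ⟨p, _, hpe⟩ := Finset.mem_biUnion.mp he
    have : e ∈ (G.induce S).edgeSet :=
      ((SimpleGraph.mem_incidenceFinset (G := G.induce S) _ _).mp hpe).1
    exact Finset.mem_range.mpr (hlt e this)
  have hFcard : F.card + N.card ≤ k :=
    le_trans (by have := Finset.card_image_le (s := E) (f := c); rw [← hF] at this; omega) hEF
  -- choose fresh colors for the edges at `v`
  have hcard : N.card ≤ (Finset.range k \ F).card := by
    rw [Finset.card_sdiff_of_subset hFk, Finset.card_range]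
    omega
  obtain ⟨T, hT_sub, hT_card⟩ := Finset.exists_subset_card_eq hcard
  have eqv : ↥N ≃ ↥T := Finset.equivOfCardEq hT_card.symm
  set f : V → ℕ := fun w => if hw : w ∈ N then ((eqv ⟨w, hw⟩ : ↥T) : ℕ) else 0 with hf
  have hf_mem : ∀ w ∈ N, f w ∈ Finset.range k \ F := by
    intro w hw
    rw [hf]
    simp only [dif_pos hw]
    exact hT_sub (eqv ⟨w, hw⟩).2
  have hf_inj : ∀ w ∈ N, ∀ w' ∈ N, f w = f w' → w = w' := by
    intro w hw w' hw' hww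
    rw [hf] at hww
    simp only [dif_pos hw, dif_pos hw'] at hww
    have := eqv.injective (Subtype.ext hww)
    exact Subtype.mk_eq_mk.mp this
  -- the new coloring
  set c' : Sym2 V → ℕ := Sym2.lift ⟨fun x y =>
      if hx : x = v then f y else if hy : y = v then f x else c s(⟨x, hx⟩, ⟨y, hy⟩), by
    intro x y
    by_cases hx : x = v <;> by_cases hy : y = v <;>
      simp [hx, hy, Sym2.eq_swap]⟩ with hc'
  have hc'_v : ∀ w : V, c' s(v, w) = f w := by
    intro w
    rw [hc']
    simp
  have hc'_old : ∀ (x y : V) (hx : x ≠ v) (hy : y ≠ v),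
      c' s(x, y) = c s(⟨x, hx⟩, ⟨y, hy⟩) := by
    intro x y hx hy
    rw [hc']
    simp [hx, hy]
  have hF_mem : ∀ (x y : V) (hx : x ≠ v) (hy : y ≠ v), G.Adj x y → (x ∈ N ∨ y ∈ N) →
      c s(⟨x, hx⟩, ⟨y, hy⟩) ∈ F := by
    intro x y hx hy hadj hmem
    rw [hF]
    apply Finset.mem_image_of_mem
    rw [hE]
    rw [Finset.mem_biUnion]
    rcases hmem with hxN | hyN
    · refine ⟨⟨x, hxN⟩, Finset.mem_attach _ _, ?_⟩
      rw [SimpleGraph.mem_incidenceFinset]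
      exact ⟨(SimpleGraph.mem_edgeSet _).mpr hadj, Sym2.mem_iff.mpr (Or.inl rfl)⟩
    · refine ⟨⟨y, hyN⟩, Finset.mem_attach _ _, ?_⟩
      rw [SimpleGraph.mem_incidenceFinset]
      exact ⟨(SimpleGraph.mem_edgeSet _).mpr hadj, Sym2.mem_iff.mpr (Or.inr rfl)⟩
  -- case analysis for edges
  have edge_split : ∀ x y : V, G.Adj x y → (x = v ∨ y = v) →
      ∃ w, G.Adj v w ∧ s(x, y) = s(v, w) ∧ c' s(x, y) = f w ∧ w ∈ N := by
    intro x y hadj hxy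
    rcases hxy with rfl | rfl
    · exact ⟨y, hadj, rfl, hc'_v y, (G.mem_neighborFinset _ _).mpr hadj⟩
    · refine ⟨x, hadj.symm, Sym2.eq_swap, ?_, (G.mem_neighborFinset _ _).mpr hadj.symm⟩
      rw [Sym2.eq_swap]
      exact hc'_v x
  have hf_notF : ∀ w ∈ N, f w ∉ F := by
    intro w hw
    have := hf_mem w hw
    rw [Finset.mem_sdiff] at this
    exact this.2
  have hproper : ProperEdgeColoring G c' := by
    rintro e₁ he₁ e₂ he₂ hne ⟨z, hz₁, hz₂⟩
    revert he₁ he₂ hne hz₁ hz₂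
    refine Sym2.inductionOn₂ e₁ e₂ ?_
    intro x₁ y₁ x₂ y₂ he₁ he₂ hne hz₁ hz₂
    rw [SimpleGraph.mem_edgeSet] at he₁ he₂
    by_cases h₁v : x₁ = v ∨ y₁ = v <;> by_cases h₂v : x₂ = v ∨ y₂ = v
    · -- both edges at v
      obtain ⟨w₁, hw₁, he₁', hcw₁, hw₁N⟩ := edge_split x₁ y₁ he₁ h₁v
      obtain ⟨w₂, hw₂, he₂', hcw₂, hw₂N⟩ := edge_split x₂ y₂ he₂ h₂v
      rw [hcw₁, hcw₂]
      intro hcc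
      apply hne
      rw [he₁', he₂', hf_inj w₁ hw₁N w₂ hw₂N hcc]
    · -- e₁ at v, e₂ not
      push_neg at h₂v
      obtain ⟨w, hw, he₁', hcw, hwN⟩ := edge_split x₁ y₁ he₁ h₁v
      have hzv : z ≠ v := by
        rintro rfl
        rw [Sym2.mem_iff] at hz₂
        rcases hz₂ with rfl | rfl
        · exact h₂v.1 rfl
        · exact h₂v.2 rfl
      have hzw : z = w := by
        rw [he₁', Sym2.mem_iff] at hz₁
        rcases hz₁ with rfl | rfl
        · exact absurd rfl hzv
        · rfl
      have hwe₂ : w ∈ N ∧ (w = x₂ ∨ w = y₂) := by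
        refine ⟨hwN, ?_⟩
        rw [← hzw]
        exact Sym2.mem_iff.mp hz₂
      rw [hcw, hc'_old x₂ y₂ h₂v.1 h₂v.2]
      intro hcc
      apply hf_notF w hwN
      rw [hcc]
      apply hF_mem x₂ y₂ h₂v.1 h₂v.2 he₂
      rcases hwe₂.2 with rfl | rfl
      · exact Or.inl hwe₂.1
      · exact Or.inr hwe₂.1
    · -- e₂ at v, e₁ not
      push_neg at h₁v
      obtain ⟨w, hw, he₂', hcw, hwN⟩ := edge_split x₂ y₂ he₂ h₂v
      have hzv : z ≠ v := by
        rintro rfl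
        rw [Sym2.mem_iff] at hz₁
        rcases hz₁ with rfl | rfl
        · exact h₁v.1 rfl
        · exact h₁v.2 rfl
      have hzw : z = w := by
        rw [he₂', Sym2.mem_iff] at hz₂
        rcases hz₂ with rfl | rfl
        · exact absurd rfl hzv
        · rfl
      have hwe₁ : w = x₁ ∨ w = y₁ := by
        rw [← hzw]
        exact Sym2.mem_iff.mp hz₁
      rw [hcw, hc'_old x₁ y₁ h₁v.1 h₁v.2]
      intro hcc
      apply hf_notF w hwN
      rw [← hcc]
      apply hF_mem x₁ y₁ h₁v.1 h₁v.2 he₁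
      rcases hwe₁ with rfl | rfl
      · exact Or.inl hwN
      · exact Or.inr hwN
    · -- both old edges
      push_neg at h₁v h₂v
      rw [hc'_old x₁ y₁ h₁v.1 h₁v.2, hc'_old x₂ y₂ h₂v.1 h₂v.2]
      refine hprop s(⟨x₁, h₁v.1⟩, ⟨y₁, h₁v.2⟩)
        ((SimpleGraph.mem_edgeSet _).mpr (by exact he₁)) s(⟨x₂, h₂v.1⟩, ⟨y₂, h₂v.2⟩)
        ((SimpleGraph.mem_edgeSet _).mpr (by exact he₂)) ?_ ?_
      · intro hcc
        apply hne
        have := congrArg (Sym2.map (Subtype.val : ↥S → V)) hcc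
        simpa using this
      · have hzv : z ≠ v := by
          rintro rfl
          rw [Sym2.mem_iff] at hz₁
          rcases hz₁ with rfl | rfl
          · exact h₁v.1 rfl
          · exact h₁v.2 rfl
        refine ⟨⟨z, hzv⟩, ?_, ?_⟩
        · rw [Sym2.mem_iff] at hz₁ ⊢
          rcases hz₁ with rfl | rfl
          · exact Or.inl rfl
          · exact Or.inr rfl
        · rw [Sym2.mem_iff] at hz₂ ⊢
          rcases hz₂ with rfl | rfl
          · exact Or.inl rfl
          · exact Or.inr rfl
  have hacyc' : ∀ a b : ℕ, (twoColorSubgraph G c' a b).IsAcyclic := by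
    intro a b x p hp
    by_cases hv : v ∈ p.support
    · -- the cycle passes through v
      have hq := hp.rotate hv
      generalize p.rotate v hv = q at hq
      cases q with
      | nil => exact hq.ne_nil rfl
      | cons h₁ r =>
        cases r with
        | nil => exact (twoColorSubgraph G c' a b).loopless.irrefl v h₁
        | cons h₂ r₂ =>
          rename_i w x₁
          have hwv : w ≠ v := h₁.ne'
          obtain ⟨y, h₁', rr', hrr⟩ := SimpleGraph.Walk.exists_eq_cons_of_ne
            (show v ≠ w from h₁.ne) ((SimpleGraph.Walk.cons h₂ r₂).reverse)
          have hnd : (SimpleGraph.Walk.cons h₁ (SimpleGraph.Walk.cons h₂ r₂)).edges.Nodup := by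
            rw [SimpleGraph.Walk.isCycle_def, SimpleGraph.Walk.isTrail_def] at hq
            exact hq.1
          rw [SimpleGraph.Walk.edges_cons, SimpleGraph.Walk.edges_cons] at hnd
          have hx₁v : x₁ ≠ v := by
            rintro rfl
            exact (List.nodup_cons.mp hnd).1 (List.mem_cons.mpr (Or.inl Sym2.eq_swap))
          have hsvy_mem : s(v, y) ∈ (SimpleGraph.Walk.cons h₂ r₂).edges := by
            have h6 : s(v, y) ∈ (SimpleGraph.Walk.cons h₂ r₂).edges.reverse := by
              rw [← SimpleGraph.Walk.edges_reverse, hrr, SimpleGraph.Walk.edges_cons]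
              exact List.mem_cons_self
            exact List.mem_reverse.mp h6
          have hwy : w ≠ y := by
            rintro rfl
            rw [SimpleGraph.Walk.edges_cons] at hsvy_mem
            exact (List.nodup_cons.mp hnd).1 hsvy_mem
          have hwN : w ∈ N := (G.mem_neighborFinset _ _).mpr h₁.1
          have hyN : y ∈ N := (G.mem_neighborFinset _ _).mpr h₁'.1
          have hfwfy : f w ≠ f y := fun hc => hwy (hf_inj w hwN y hyN hc)
          have hcw : c' s(v, w) = a ∨ c' s(v, w) = b := h₁.2
          have hcy : c' s(v, y) = a ∨ c' s(v, y) = b := h₁'.2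
          have hcwx : c' s(w, x₁) = a ∨ c' s(w, x₁) = b := h₂.2
          have hne_edge : s(v, w) ≠ s(w, x₁) := by
            intro hcc
            rw [Sym2.eq_iff] at hcc
            rcases hcc with ⟨hvw, _⟩ | ⟨hvx, _⟩
            · exact h₁.1.ne hvw
            · exact hx₁v hvx.symm
          have hP : c' s(v, w) ≠ c' s(w, x₁) :=
            hproper _ ((SimpleGraph.mem_edgeSet _).mpr h₁.1) _
              ((SimpleGraph.mem_edgeSet _).mpr h₂.1) hne_edge
              ⟨w, Sym2.mem_iff.mpr (Or.inr rfl), Sym2.mem_iff.mpr (Or.inl rfl)⟩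
          rw [hc'_v w] at hcw hP
          rw [hc'_v y] at hcy
          have heq : c' s(w, x₁) = f y := by omega
          have hwNold : c' s(w, x₁) ∈ F := by
            rw [hc'_old w x₁ hwv hx₁v]
            exact hF_mem w x₁ hwv hx₁v h₂.1 (Or.inl hwN)
          exact hf_notF y hyN (heq ▸ hwNold)
    · -- the cycle avoids v
      have hsup : ∀ u ∈ p.support, u ∈ S := fun u hu he => hv (he ▸ hu)
      obtain ⟨q, hqmap⟩ := walk_induce p hsup
      have hqc : q.IsCycle := by
        have hinj : Function.Injective
            (SimpleGraph.Embedding.induce (G := twoColorSubgraph G c' a b) S).toHom :=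
          Subtype.val_injective
        exact (SimpleGraph.Walk.map_isCycle_iff_of_injective hinj).mp
          (by rw [hqmap]; exact hp)
      have hle : (twoColorSubgraph G c' a b).induce S ≤ twoColorSubgraph (G.induce S) c a b := by
        intro x' y' hxy
        refine ⟨hxy.1, ?_⟩
        have h2 := hxy.2
        simp only [Function.Embedding.coe_subtype] at h2
        rw [hc'_old (x' : V) (y' : V) x'.2 y'.2] at h2
        simpa using h2
      exact hacyc a b _ (hqc.mapLe hle)
  refine ⟨c', ⟨hproper, hacyc'⟩, ?_⟩
  intro e he
  revert he
  refine Sym2.ind ?_ e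
  intro x y he
  rw [SimpleGraph.mem_edgeSet] at he
  by_cases hxy : x = v ∨ y = v
  · obtain ⟨w, _, _, hcw, hwN⟩ := edge_split x y he hxy
    rw [hcw]
    have h7 := hf_mem w hwN
    rw [Finset.mem_sdiff, Finset.mem_range] at h7
    exact h7.1
  · push_neg at hxy
    rw [hc'_old x y hxy.1 hxy.2]
    exact hlt _ ((SimpleGraph.mem_edgeSet _).mpr (by exact he))
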